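/- Let n = 2m and E = {λ ∈ F_{2^n} : λ^{2^m} + λ = 1}. The map σ : E → F_{2^m} given by σ(λ) = λ · λ^{2^m} is two-to-one onto its image, and its image is exactly the set of elements v ∈ F_{2^m} with Tr^m_1(v) = 1. -/
import Mathlib


open Finset

/-- The Artin–Schreier additive map `x ↦ x^2 + x` in characteristic two. -/
def ASmap (F : Type*) [CommRing F] (h2 : (2 : F) = 0) : F →+ F where
  toFun x := x ^ 2 + x
  map_zero' := by norm_num
  map_add' a b := by linear_combination (a * b) * h2

theorem stmt_2 (m : ℕ) (hm : 1 ≤ m) (F : Type*) [Field F] [Fintype F]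
    (hF : Fintype.card F = 2 ^ (2 * m)) :
    (∀ v : F, (v ^ 2 ^ m = v ∧ (∑ i ∈ Finset.range m, v ^ 2 ^ i) = 1) ↔
        ∃ l : F, l ^ 2 ^ m + l = 1 ∧ l * l ^ 2 ^ m = v) ∧
    (∀ l₁ l₂ : F, l₁ ^ 2 ^ m + l₁ = 1 → l₂ ^ 2 ^ m + l₂ = 1 →
        (l₁ * l₁ ^ 2 ^ m = l₂ * l₂ ^ 2 ^ m ↔ l₂ = l₁ ∨ l₂ = l₁ + 1)) := by
  classical
  -- characteristic 2
  obtain ⟨p, hp⟩ := CharP.exists F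
  haveI := hp
  obtain ⟨n, hpp, hcard⟩ := FiniteField.card F p
  have hp2 : p = 2 := by
    have hd : p ∣ 2 ^ (2 * m) := by
      rw [← hF, hcard]; exact dvd_pow_self p n.2.ne'
    exact (Nat.prime_dvd_prime_iff_eq hpp Nat.prime_two).mp (hpp.dvd_of_dvd_pow hd)
  subst hp2
  haveI hchar : CharP F 2 := hp
  haveI : Fact (Nat.Prime 2) := ⟨Nat.prime_two⟩
  have h2 : (2 : F) = 0 := CharP.cast_eq_zero F 2
  -- Frobenius facts
  have frob : ∀ (x y : F) (k : ℕ), (x + y) ^ 2 ^ k = x ^ 2 ^ k + y ^ 2 ^ k :=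
    fun x y k => add_pow_char_pow x y 2 k
  have sqpow : ∀ (x : F) (k : ℕ), (x ^ 2) ^ 2 ^ k = x ^ 2 ^ (k + 1) := by
    intro x k
    rw [← pow_mul, pow_succ, mul_comm 2 (2 ^ k)]
  have pc : ∀ (x : F) (k : ℕ), (x ^ 2 ^ k) ^ 2 = (x ^ 2) ^ 2 ^ k := by
    intro x k
    rw [← pow_mul, ← pow_mul, mul_comm]
  -- telescoping of the trace of x² + x
  have tele : ∀ (x : F) (k : ℕ),
      ∑ i ∈ Finset.range k, (x ^ 2 + x) ^ 2 ^ i = x ^ 2 ^ k + x := by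
    intro x k
    have h1 : ∀ i, (x ^ 2 + x) ^ 2 ^ i = x ^ 2 ^ (i + 1) - x ^ 2 ^ i := by
      intro i
      rw [frob, sqpow]
      ring_nf
      linear_combination (x ^ 2 ^ i) * h2
    calc ∑ i ∈ Finset.range k, (x ^ 2 + x) ^ 2 ^ i
        = ∑ i ∈ Finset.range k, (x ^ 2 ^ (i + 1) - x ^ 2 ^ i) :=
          Finset.sum_congr rfl fun i _ => h1 i
      _ = x ^ 2 ^ k - x ^ 2 ^ 0 := Finset.sum_range_sub (fun i => x ^ 2 ^ i) k
      _ = x ^ 2 ^ k + x := by rw [pow_zero, pow_one]; linear_combination (-x) * h2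
  -- the Artin–Schreier map and its kernel
  set φ : F →+ F := ASmap F h2 with hφdef
  have hφ : ∀ x : F, φ x = x ^ 2 + x := fun _ => rfl
  have hker : (φ.ker : Set F) = {0, 1} := by
    ext x
    simp only [SetLike.mem_coe, AddMonoidHom.mem_ker, hφ, Set.mem_insert_iff,
      Set.mem_singleton_iff]
    constructor
    · intro hx
      have hx' : x * (x + 1) = 0 := by linear_combination hx
      rcases mul_eq_zero.mp hx' with h | h
      · exact Or.inl h
      · exact Or.inr (by linear_combination h - h2)
    · rintro (rfl | rfl)
      · norm_num
      · linear_combination h2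
  have hkcard : Nat.card φ.ker = 2 := by
    have e : Nat.card φ.ker = Nat.card (({0, 1} : Set F)) := by
      rw [← hker]; rfl
    rw [e, Nat.card_coe_set_eq, Set.ncard_pair (zero_ne_one' F)]
  have hcardF : Nat.card F = 2 ^ (2 * m) := by rw [Nat.card_eq_fintype_card, hF]
  have hquot : Nat.card φ.range * Nat.card φ.ker = Nat.card F := by
    rw [← Nat.card_congr (QuotientAddGroup.quotientKerEquivRange φ).toEquiv]
    exact (AddSubgroup.card_eq_card_quotient_mul_card_addSubgroup φ.ker).symm
  have hrange : Nat.card φ.range = 2 ^ (2 * m - 1) := by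
    have h1 : Nat.card φ.range * 2 = 2 ^ (2 * m - 1) * 2 := by
      have e : 2 ^ (2 * m - 1) * 2 = 2 ^ (2 * m) := by
        rw [← pow_succ]; congr 1; omega
      rw [e, ← hcardF, ← hquot, hkcard]
    exact Nat.eq_of_mul_eq_mul_right (by norm_num) h1
  -- the absolute-trace-zero set and its cardinality bound
  set P : Polynomial F := ∑ i ∈ Finset.range (2 * m), Polynomial.X ^ 2 ^ i with hP
  have hPne : P ≠ 0 := by
    intro h
    have hc : P.coeff (2 ^ (2 * m - 1)) = 1 := by
      rw [hP, Polynomial.finset_sum_coeff]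
      rw [Finset.sum_eq_single (2 * m - 1)]
      · simp [Polynomial.coeff_X_pow]
      · intro i hi hne
        rw [Polynomial.coeff_X_pow, if_neg]
        exact fun he => hne ((Nat.pow_right_injective le_rfl he).symm)
      · intro h'
        exact absurd (Finset.mem_range.mpr (by omega)) h'
    rw [h] at hc
    simp at hc
  have hPdeg : P.natDegree ≤ 2 ^ (2 * m - 1) := by
    apply Polynomial.natDegree_sum_le_of_forall_le
    intro i hi
    rw [Polynomial.natDegree_X_pow]
    exact Nat.pow_le_pow_right (by norm_num) (by
      have := Finset.mem_range.mp hi; omega)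
  set T : Set F := {y : F | ∑ i ∈ Finset.range (2 * m), y ^ 2 ^ i = 0} with hT
  have hTsub : T ⊆ ↑P.roots.toFinset := by
    intro y hy
    simp only [Multiset.mem_toFinset, Finset.mem_coe]
    rw [Polynomial.mem_roots hPne]
    simp only [Polynomial.IsRoot, hP, Polynomial.eval_finset_sum, Polynomial.eval_pow,
      Polynomial.eval_X]
    exact hy
  have hTcard : T.ncard ≤ 2 ^ (2 * m - 1) := by
    calc T.ncard ≤ (↑P.roots.toFinset : Set F).ncard :=
          Set.ncard_le_ncard hTsub (Finset.finite_toSet _)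
      _ = P.roots.toFinset.card := Set.ncard_coe_finset _
      _ ≤ Multiset.card P.roots := Multiset.toFinset_card_le _
      _ ≤ P.natDegree := P.card_roots'
      _ ≤ 2 ^ (2 * m - 1) := hPdeg
  -- the range of the Artin–Schreier map equals the trace-zero set
  have hsub : (φ.range : Set F) ⊆ T := by
    rintro y hy
    obtain ⟨x, rfl⟩ := hy
    show ∑ i ∈ Finset.range (2 * m), (φ x) ^ 2 ^ i = 0
    rw [hφ x, tele x (2 * m)]
    have hx : x ^ 2 ^ (2 * m) = x := by rw [← hF]; exact FiniteField.pow_card x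
    rw [hx]
    linear_combination x * h2
  have hrncard : (φ.range : Set F).ncard = 2 ^ (2 * m - 1) := by
    rw [← Nat.card_coe_set_eq]
    rw [← hrange]; rfl
  have heq : (φ.range : Set F) = T :=
    Set.eq_of_subset_of_ncard_le hsub (by rw [hrncard]; exact hTcard) (Set.toFinite T)
  constructor
  · -- part 1
    intro v
    constructor
    · rintro ⟨hv1, hv2⟩
      -- v is in the trace-zero set
      have hvT : v ∈ T := by
        show ∑ i ∈ Finset.range (2 * m), v ^ 2 ^ i = 0
        rw [two_mul, Finset.sum_range_add]
        have hsh : ∀ i, v ^ 2 ^ (m + i) = v ^ 2 ^ i := by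
          intro i
          rw [pow_add, pow_mul, hv1]
        rw [Finset.sum_congr rfl fun i _ => hsh i, hv2]
        linear_combination h2
      rw [← heq] at hvT
      obtain ⟨l, hl⟩ := hvT
      have hl' : l ^ 2 + l = v := hl
      -- analyze t = l^(2^m) + l
      have ha2 : (l ^ 2 ^ m) ^ 2 + l ^ 2 ^ m = v := by
        rw [pc l m, ← frob (l ^ 2) l m, hl', hv1]
      have ht : (l ^ 2 ^ m + l) ^ 2 + (l ^ 2 ^ m + l) = 0 := by
        linear_combination ha2 + hl' + (l ^ 2 ^ m * l + v) * h2
      have ht' : (l ^ 2 ^ m + l) * ((l ^ 2 ^ m + l) + 1) = 0 := by linear_combination ht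
      rcases mul_eq_zero.mp ht' with h | h
      · -- t = 0 gives l in the subfield, contradicting trace 1
        exfalso
        have hfix : l ^ 2 ^ m = l := by linear_combination h - l * h2
        have : (1 : F) = 0 := by
          rw [← hv2, Finset.sum_congr rfl fun i _ => by rw [← hl'], tele l m, hfix]
          linear_combination l * h2
        exact one_ne_zero this
      · have ht1 : l ^ 2 ^ m + l = 1 := by linear_combination h - h2
        exact ⟨l, ht1, by linear_combination l * ht1 + hl' - l ^ 2 * h2⟩
    · rintro ⟨l, hl1, hlv⟩
      have hv' : l ^ 2 + l = v := by linear_combination hlv - l * hl1 + l ^ 2 * h2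
      have ha : l ^ 2 ^ m = 1 - l := by linear_combination hl1
      constructor
      · rw [← hv', frob (l ^ 2) l m, ← pc l m, ha]
        linear_combination (1 - 2 * l) * h2
      · rw [Finset.sum_congr rfl fun i _ => by rw [← hv'], tele l m]
        exact hl1
  · -- part 2
    intro l₁ l₂ ha1 ha2
    have e1 : l₁ ^ 2 ^ m = 1 - l₁ := by linear_combination ha1
    have e2 : l₂ ^ 2 ^ m = 1 - l₂ := by linear_combination ha2
    constructor
    · intro h
      rw [e1, e2] at h
      have key : (l₂ - l₁) * (l₂ + l₁ - 1) = 0 := by linear_combination h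
      rcases mul_eq_zero.mp key with hh | hh
      · exact Or.inl (by linear_combination hh)
      · exact Or.inr (by linear_combination hh - l₁ * h2)
    · rintro (rfl | rfl)
      · rfl
      · rw [e1, e2]
        linear_combination l₁ * h2
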